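/- arXiv:2301.01899 — 3 statements merged into one kernel-verified Lean document; each statement's English description precedes it below -/
import Mathlib

section
/- Let τ > 0, let μ : [q] → ℝ≥0 be a probability vector (a belief message), and let ŝ(r)(g) = α(r)(g)μ(g)/Σ_h α(r)(h)μ(h) with α the softmax of temperature τ², assuming the denominator is positive. Then every partial derivative of ŝ is bounded: |∂ŝ(r)(g)/∂r(h)| ≤ 1/(4τ²) for all g, h and all r. -/
/-- Softmax with temperature `τ²`. -/
noncomputable def softmaxT (q : ℕ) (τ : ℝ) (r : Fin q → ℝ) (g : Fin q) : ℝ :=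
  Real.exp (r g / τ ^ 2) / ∑ k, Real.exp (r k / τ ^ 2)

/-- Softmax reweighted by a fixed nonnegative vector `μ`. -/
noncomputable def reweightedSoftmax (q : ℕ) (τ : ℝ) (μ : Fin q → ℝ)
    (r : Fin q → ℝ) (g : Fin q) : ℝ :=
  softmaxT q τ r g * μ g / ∑ h, softmaxT q τ r h * μ h

set_option maxHeartbeats 1000000 in
theorem stmt_8 (q : ℕ) (hq : 1 ≤ q) (τ : ℝ) (hτ : 0 < τ) (μ : Fin q → ℝ)
    (hμnn : ∀ g, 0 ≤ μ g) (hμsum : ∑ g, μ g = 1)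
    (hden : ∀ r : Fin q → ℝ, 0 < ∑ h, softmaxT q τ r h * μ h)
    (r : Fin q → ℝ) (g h : Fin q) :
    |fderiv ℝ (fun r' : Fin q → ℝ => reweightedSoftmax q τ μ r' g) r (Pi.single h 1)|
      ≤ 1 / (4 * τ ^ 2) := by
  haveI : Nonempty (Fin q) := ⟨⟨0, hq⟩⟩
  have hτ2 : (0 : ℝ) < τ ^ 2 := by positivity
  -- some μ k is positive
  obtain ⟨k0, hk0⟩ : ∃ k, 0 < μ k := by
    by_contra hc
    push_neg at hc
    have : (∑ g, μ g) ≤ 0 := Finset.sum_nonpos fun k _ => hc k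
    linarith [hμsum ▸ this]
  -- denominator D
  set D : (Fin q → ℝ) → ℝ := fun r' => ∑ k, Real.exp (r' k / τ ^ 2) * μ k with hDdef
  have hDpos : ∀ r' : Fin q → ℝ, 0 < D r' := by
    intro r'
    refine Finset.sum_pos' (fun k _ => mul_nonneg (Real.exp_pos _).le (hμnn k)) ⟨k0, Finset.mem_univ _, ?_⟩
    exact mul_pos (Real.exp_pos _) hk0
  -- rewrite the function as a simple quotient
  have hfun : (fun r' : Fin q → ℝ => reweightedSoftmax q τ μ r' g)
      = fun r' : Fin q → ℝ => (Real.exp (r' g / τ ^ 2) * μ g) * (D r')⁻¹ := by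
    funext r'
    have hS : 0 < ∑ k, Real.exp (r' k / τ ^ 2) :=
      Finset.sum_pos (fun k _ => Real.exp_pos _) Finset.univ_nonempty
    have hDne : (∑ k, Real.exp (r' k / τ ^ 2) * μ k) ≠ 0 := (hDpos r').ne'
    simp only [reweightedSoftmax, softmaxT, div_mul_eq_mul_div, ← Finset.sum_div, hDdef]
    field_simp
  -- derivatives of the summands
  have hE : ∀ k : Fin q, HasFDerivAt (fun r' : Fin q → ℝ => Real.exp (r' k / τ ^ 2) * μ k)
      ((μ k) • ((Real.exp (r k / τ ^ 2)) • ((τ ^ 2)⁻¹ •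
        (ContinuousLinearMap.proj k : (Fin q → ℝ) →L[ℝ] ℝ)))) r := by
    intro k
    have h1 : HasFDerivAt (fun r' : Fin q → ℝ => r' k)
        (ContinuousLinearMap.proj k : (Fin q → ℝ) →L[ℝ] ℝ) r :=
      (ContinuousLinearMap.proj k : (Fin q → ℝ) →L[ℝ] ℝ).hasFDerivAt
    have h2 := ((h1.mul_const ((τ ^ 2)⁻¹)).exp).mul_const (μ k)
    simp only [div_eq_mul_inv]
    exact h2
  have hD' : HasFDerivAt D (∑ k, ((μ k) • ((Real.exp (r k / τ ^ 2)) • ((τ ^ 2)⁻¹ •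
      (ContinuousLinearMap.proj k : (Fin q → ℝ) →L[ℝ] ℝ))))) r :=
    HasFDerivAt.fun_sum fun k _ => hE k
  have hinv : HasFDerivAt (fun r' => (D r')⁻¹) ((-(D r ^ 2)⁻¹) • (∑ k, ((μ k) •
      ((Real.exp (r k / τ ^ 2)) • ((τ ^ 2)⁻¹ •
      (ContinuousLinearMap.proj k : (Fin q → ℝ) →L[ℝ] ℝ)))))) r :=
    (hasDerivAt_inv (hDpos r).ne').comp_hasFDerivAt r hD'
  have hf := (hE g).fun_mul hinv
  rw [hfun, hf.fderiv]
  -- evaluate the derivative at Pi.single h 1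
  have hproj : ∀ k : Fin q, (ContinuousLinearMap.proj k : (Fin q → ℝ) →L[ℝ] ℝ)
      (Pi.single h 1) = if k = h then 1 else 0 := by
    intro k
    simp [Pi.single_apply]
  have heval : ∀ k : Fin q, ((μ k) • ((Real.exp (r k / τ ^ 2)) • ((τ ^ 2)⁻¹ •
      (ContinuousLinearMap.proj k : (Fin q → ℝ) →L[ℝ] ℝ)))) (Pi.single h 1)
      = μ k * Real.exp (r k / τ ^ 2) * (τ ^ 2)⁻¹ * (if k = h then 1 else 0) := by
    intro k
    simp [hproj k]; ring
  set a : ℝ := Real.exp (r g / τ ^ 2) * μ g / D r with hadef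
  set b : ℝ := Real.exp (r h / τ ^ 2) * μ h / D r with hbdef
  have hsum : ((∑ k, ((μ k) • ((Real.exp (r k / τ ^ 2)) • ((τ ^ 2)⁻¹ •
      (ContinuousLinearMap.proj k : (Fin q → ℝ) →L[ℝ] ℝ))))) : (Fin q → ℝ) →L[ℝ] ℝ)
      (Pi.single h 1) = μ h * Real.exp (r h / τ ^ 2) * (τ ^ 2)⁻¹ := by
    rw [ContinuousLinearMap.sum_apply]
    rw [Finset.sum_congr rfl fun k _ => heval k]
    simp [Finset.sum_ite_eq']
  have hval : ((Real.exp (r g / τ ^ 2) * μ g) • ((-(D r ^ 2)⁻¹) • (∑ k, ((μ k) •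
      ((Real.exp (r k / τ ^ 2)) • ((τ ^ 2)⁻¹ •
      (ContinuousLinearMap.proj k : (Fin q → ℝ) →L[ℝ] ℝ)))))) +
      (D r)⁻¹ • ((μ g) • ((Real.exp (r g / τ ^ 2)) • ((τ ^ 2)⁻¹ •
      (ContinuousLinearMap.proj g : (Fin q → ℝ) →L[ℝ] ℝ))))) (Pi.single h 1)
      = (τ ^ 2)⁻¹ * ((if g = h then a else 0) - a * b) := by
    simp only [ContinuousLinearMap.add_apply, ContinuousLinearMap.smul_apply, hsum,
      ContinuousLinearMap.smul_apply, hproj g, smul_eq_mul]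
    have hDne : D r ≠ 0 := (hDpos r).ne'
    rw [hadef, hbdef]
    by_cases hgh : g = h
    · subst hgh; simp only [if_pos rfl, if_true]
      field_simp
      ring
    · simp only [if_neg hgh]
      field_simp
      ring
  rw [hval, abs_mul, abs_of_nonneg (inv_nonneg.2 hτ2.le)]
  have hDne : D r ≠ 0 := (hDpos r).ne'
  have ha0 : 0 ≤ a := div_nonneg (mul_nonneg (Real.exp_pos _).le (hμnn g)) (hDpos r).le
  have hb0 : 0 ≤ b := div_nonneg (mul_nonneg (Real.exp_pos _).le (hμnn h)) (hDpos r).le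
  have ha1 : a ≤ 1 := by
    rw [hadef, div_le_one (hDpos r)]
    exact Finset.single_le_sum (f := fun k => Real.exp (r k / τ ^ 2) * μ k)
      (fun k _ => mul_nonneg (Real.exp_pos _).le (hμnn k)) (Finset.mem_univ g)
  have hX : |(if g = h then a else 0) - a * b| ≤ 1 / 4 := by
    by_cases hgh : g = h
    · subst hgh
      simp only [eq_self_iff_true, if_true]
      have hab : a = b := rfl
      rw [← hab, abs_le]
      constructor <;> nlinarith [mul_nonneg ha0 ha0, sq_nonneg (a - 1/2), sq_nonneg a]
    · have hab : a + b ≤ 1 := by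
        rw [hadef, hbdef, ← add_div, div_le_one (hDpos r)]
        calc Real.exp (r g / τ ^ 2) * μ g + Real.exp (r h / τ ^ 2) * μ h
            = ∑ k ∈ ({g, h} : Finset (Fin q)), Real.exp (r k / τ ^ 2) * μ k := by
              rw [Finset.sum_pair hgh]
          _ ≤ D r := Finset.sum_le_sum_of_subset_of_nonneg (Finset.subset_univ _)
              (fun k _ _ => mul_nonneg (Real.exp_pos _).le (hμnn k))
      simp only [if_neg hgh]
      rw [abs_le]
      constructor <;> nlinarith [mul_nonneg ha0 hb0, sq_nonneg (a - b), sq_nonneg (a + b)]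
  calc (τ ^ 2)⁻¹ * |(if g = h then a else 0) - a * b| ≤ (τ ^ 2)⁻¹ * (1 / 4) := by
        exact mul_le_mul_of_nonneg_left hX (inv_nonneg.2 hτ2.le)
    _ = 1 / (4 * τ ^ 2) := by field_simp
end

section
/- Let τ > 0, let β : ℝ^q → ℝ^q be a differentiable map whose values are entrywise nonnegative with Σ_h β(r)(h)·w(h) > 0 for a fixed nonnegative vector w, and suppose ∂β(r)/∂t = (1/τ²)(ν − ‖ν‖₁·β(r)) for some direction t and some ν with 0 ≤ ν ≤ β(r). Define the normalized product m(r)(g) = β(r)(g)w(g)/Σ_h β(r)(h)w(h). Then ∂m(r)/∂t = (1/τ²)(ν' − ‖ν'‖₁·m(r)) where ν'(g) = ν(g)w(g)/Σ_h β(r)(h)w(h), and 0 ≤ ν' ≤ m(r) entrywise. -/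
theorem stmt_14 (q : ℕ) (τ : ℝ) (hτ : 0 < τ)
    (β : (Fin q → ℝ) → Fin q → ℝ) (w : Fin q → ℝ)
    (hβdiff : ∀ g, Differentiable ℝ (fun r => β r g))
    (hβnn : ∀ r g, 0 ≤ β r g) (hw : ∀ g, 0 ≤ w g)
    (hden : ∀ r, 0 < ∑ h, β r h * w h)
    (r₀ t : Fin q → ℝ) (ν : Fin q → ℝ)
    (hν : ∀ g, 0 ≤ ν g ∧ ν g ≤ β r₀ g)
    (hderiv : ∀ g, fderiv ℝ (fun r => β r g) r₀ t
      = (1 / τ ^ 2) * (ν g - (∑ k, ν k) * β r₀ g)) :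
    -- the normalized product `m r g = β r g * w g / Σ_h β r h * w h`
    -- has derivative in direction `t` of the same canonical form, with
    -- `ν' g = ν g * w g / Σ_h β r₀ h * w h` and `0 ≤ ν' ≤ m r₀`.
    (∀ g, fderiv ℝ (fun r => β r g * w g / ∑ h, β r h * w h) r₀ t
      = (1 / τ ^ 2) * ((ν g * w g / ∑ h, β r₀ h * w h)
          - (∑ k, ν k * w k / ∑ h, β r₀ h * w h)
            * (β r₀ g * w g / ∑ h, β r₀ h * w h))) ∧
    (∀ g, 0 ≤ ν g * w g / ∑ h, β r₀ h * w h ∧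
      ν g * w g / (∑ h, β r₀ h * w h) ≤ β r₀ g * w g / ∑ h, β r₀ h * w h) := by
  have hS := hden r₀
  set S : ℝ := ∑ h, β r₀ h * w h with hSdef
  have hSne : S ≠ 0 := ne_of_gt hS
  constructor
  · intro g
    have hfnum : HasFDerivAt (fun r => β r g * w g)
        ((w g) • fderiv ℝ (fun r => β r g) r₀) r₀ := by
      exact ((hβdiff g) r₀).hasFDerivAt.mul_const (w g)
    have hfden : HasFDerivAt (fun r => ∑ h, β r h * w h)
        (∑ h, (w h) • fderiv ℝ (fun r => β r h) r₀) r₀ := by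
      apply HasFDerivAt.fun_sum
      intro h _
      exact ((hβdiff h) r₀).hasFDerivAt.mul_const (w h)
    have hinv : HasFDerivAt (fun r => (∑ h, β r h * w h)⁻¹)
        ((ContinuousLinearMap.smulRight (1 : ℝ →L[ℝ] ℝ) (-(S ^ 2)⁻¹)).comp
          (∑ h, (w h) • fderiv ℝ (fun r => β r h) r₀)) r₀ :=
      (hasFDerivAt_inv hSne).comp r₀ hfden
    have hprod := hfnum.fun_mul hinv
    have hgoal : HasFDerivAt (fun r => β r g * w g / ∑ h, β r h * w h)
        ((β r₀ g * w g) •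
          ((ContinuousLinearMap.smulRight (1 : ℝ →L[ℝ] ℝ) (-(S ^ 2)⁻¹)).comp
            (∑ h, (w h) • fderiv ℝ (fun r => β r h) r₀))
          + S⁻¹ • ((w g) • fderiv ℝ (fun r => β r g) r₀)) r₀ := by
      simpa [div_eq_mul_inv, ← hSdef] using hprod
    rw [hgoal.fderiv]
    have hτ2 : (τ : ℝ) ^ 2 ≠ 0 := by positivity
    have hsum : (∑ h, (w h) • fderiv ℝ (fun r => β r h) r₀) t
        = (1 / τ ^ 2) * ((∑ h, ν h * w h) - (∑ k, ν k) * S) := by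
      have key : ∀ h : Fin q, w h * (fderiv ℝ (fun r => β r h) r₀ t)
          = 1 / τ ^ 2 * (ν h * w h) - ((1 / τ ^ 2) * ∑ k, ν k) * (β r₀ h * w h) :=
        fun h => by rw [hderiv h]; ring
      simp only [ContinuousLinearMap.sum_apply, ContinuousLinearMap.smul_apply, smul_eq_mul]
      rw [Finset.sum_congr rfl (fun h _ => key h), Finset.sum_sub_distrib,
        ← Finset.mul_sum, ← Finset.mul_sum, hSdef]
      ring
    simp only [ContinuousLinearMap.add_apply, ContinuousLinearMap.smul_apply,
      ContinuousLinearMap.comp_apply, ContinuousLinearMap.smulRight_apply,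
      ContinuousLinearMap.one_apply, smul_eq_mul]
    rw [hsum, hderiv g, ← Finset.sum_div]
    field_simp
    ring
  · intro g
    have h1 := (hν g).1
    have h2 := (hν g).2
    have hwg := hw g
    constructor
    · positivity
    · gcongr
end

section
/- Let η : ℝ^{qL} → ℝ^{qL} act blockwise on L blocks of size q, with the ℓ-th block given by ŝ_ℓ(r) = (softmax reweighted by a fixed positive probability vector μ_ℓ of the ℓ-th block r_ℓ, temperature τ²). Then the divergence of η equals (1/τ²)(‖η(r)‖₁ − ‖η(r)‖²), where ‖·‖₁ and ‖·‖ are the ℓ¹ and Euclidean norms on ℝ^{qL}. -/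
/-- Softmax of block `ℓ` with temperature `τ²` for a blockwise signal. -/
noncomputable def blockSoftmax (q L : ℕ) (τ : ℝ) (r : Fin L × Fin q → ℝ)
    (ℓ : Fin L) (g : Fin q) : ℝ :=
  Real.exp (r (ℓ, g) / τ ^ 2) / ∑ k, Real.exp (r (ℓ, k) / τ ^ 2)

/-- Blockwise reweighted-softmax denoiser. -/
noncomputable def blockDenoiser (q L : ℕ) (τ : ℝ) (μ : Fin L → Fin q → ℝ)
    (r : Fin L × Fin q → ℝ) (p : Fin L × Fin q) : ℝ :=
  blockSoftmax q L τ r p.1 p.2 * μ p.1 p.2 /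
    ∑ h, blockSoftmax q L τ r p.1 h * μ p.1 h

-- key rewrite
lemma denoiser_eq (q L : ℕ) (hq : 1 ≤ q) (τ : ℝ) (hτ : 0 < τ)
    (μ : Fin L → Fin q → ℝ) (hμpos : ∀ ℓ g, 0 < μ ℓ g)
    (r : Fin L × Fin q → ℝ) (ℓ : Fin L) (g : Fin q) :
    blockDenoiser q L τ μ r (ℓ, g)
      = (Real.exp (r (ℓ, g) / τ ^ 2) * μ ℓ g)
        / ∑ h, Real.exp (r (ℓ, h) / τ ^ 2) * μ ℓ h := by
  have : Nonempty (Fin q) := ⟨⟨0, hq⟩⟩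
  have hS : (0:ℝ) < ∑ k, Real.exp (r (ℓ, k) / τ ^ 2) :=
    Finset.sum_pos (fun k _ => Real.exp_pos _) Finset.univ_nonempty
  have hA : (0:ℝ) < ∑ h, Real.exp (r (ℓ, h) / τ ^ 2) * μ ℓ h :=
    Finset.sum_pos (fun h _ => mul_pos (Real.exp_pos _) (hμpos ℓ h)) Finset.univ_nonempty
  simp only [blockDenoiser, blockSoftmax]
  rw [show (∑ h, Real.exp (r (ℓ, h) / τ ^ 2) / (∑ k, Real.exp (r (ℓ, k) / τ ^ 2)) * μ ℓ h)
      = (∑ h, Real.exp (r (ℓ, h) / τ ^ 2) * μ ℓ h) / (∑ k, Real.exp (r (ℓ, k) / τ ^ 2)) by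
    rw [Finset.sum_div]; exact Finset.sum_congr rfl fun h _ => by ring]
  field_simp

lemma fderiv_val (q L : ℕ) (hq : 1 ≤ q) (τ : ℝ) (hτ : 0 < τ)
    (μ : Fin L → Fin q → ℝ) (hμpos : ∀ ℓ g, 0 < μ ℓ g)
    (r : Fin L × Fin q → ℝ) (ℓ : Fin L) (g : Fin q) :
    fderiv ℝ (fun r' => blockDenoiser q L τ μ r' (ℓ, g)) r (Pi.single (ℓ, g) 1)
      = (τ ^ 2)⁻¹ * (blockDenoiser q L τ μ r (ℓ, g)
          - blockDenoiser q L τ μ r (ℓ, g) ^ 2) := by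
  have : Nonempty (Fin q) := ⟨⟨0, hq⟩⟩
  set c : ℝ := (τ ^ 2)⁻¹ with hc
  set E : Fin q → ℝ := fun h => Real.exp (r (ℓ, h) / τ ^ 2) * μ ℓ h with hE
  let pr : Fin q → ((Fin L × Fin q → ℝ) →L[ℝ] ℝ) := fun h => ContinuousLinearMap.proj (ℓ, h)
  have hD : (0:ℝ) < ∑ h, E h :=
    Finset.sum_pos (fun h _ => mul_pos (Real.exp_pos _) (hμpos ℓ h)) Finset.univ_nonempty
  -- derivative of each summand
  have hbase : ∀ h : Fin q, HasFDerivAt (fun r' : Fin L × Fin q → ℝ => r' (ℓ, h) / τ ^ 2)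
      (c • pr h) r := by
    intro h
    have := (pr h).hasFDerivAt (x := r)
    have h2 := this.const_mul c
    simpa [div_eq_inv_mul, hc, pr] using h2
  have hterm : ∀ h : Fin q, HasFDerivAt
      (fun r' : Fin L × Fin q → ℝ => Real.exp (r' (ℓ, h) / τ ^ 2) * μ ℓ h)
      ((E h * c) • pr h) r := by
    intro h
    have h2 := ((hbase h).exp).mul_const (μ ℓ h)
    have heq : (E h * c) • pr h = μ ℓ h • Real.exp (r (ℓ, h) / τ ^ 2) • c • pr h := by
      rw [smul_smul, smul_smul]
      congr 1
      simp only [hE]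
      ring
    rw [heq]
    exact h2
  have hDen : HasFDerivAt (fun r' : Fin L × Fin q → ℝ =>
      ∑ h, Real.exp (r' (ℓ, h) / τ ^ 2) * μ ℓ h)
      (∑ h, (E h * c) • pr h) r :=
    HasFDerivAt.fun_sum (fun h _ => hterm h)
  have hInv : HasFDerivAt (fun r' : Fin L × Fin q → ℝ =>
      (∑ h, Real.exp (r' (ℓ, h) / τ ^ 2) * μ ℓ h)⁻¹)
      ((-(((∑ h, E h)) ^ 2)⁻¹) • (∑ h, (E h * c) • pr h)) r := by
    exact (hasDerivAt_inv hD.ne').comp_hasFDerivAt r hDen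
  have hF : HasFDerivAt (fun r' => blockDenoiser q L τ μ r' (ℓ, g))
      ((E g) • ((-(((∑ h, E h)) ^ 2)⁻¹) • (∑ h, (E h * c) • pr h))
        + ((∑ h, E h)⁻¹) • ((E g * c) • pr g)) r := by
    have h1 := (hterm g).mul hInv
    have heq : (fun r' => blockDenoiser q L τ μ r' (ℓ, g))
        = fun r' : Fin L × Fin q → ℝ => (Real.exp (r' (ℓ, g) / τ ^ 2) * μ ℓ g)
            * (∑ h, Real.exp (r' (ℓ, h) / τ ^ 2) * μ ℓ h)⁻¹ := by
      funext r'
      rw [denoiser_eq q L hq τ hτ μ hμpos r' ℓ g, div_eq_mul_inv]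
    rw [heq]
    exact h1
  rw [hF.fderiv]
  have hproj : ∀ h : Fin q,
      (Pi.single (M := fun _ : Fin L × Fin q => ℝ) (ℓ, g) 1) (ℓ, h) = if h = g then 1 else 0 := by
    intro h
    simp [Pi.single_apply, Prod.ext_iff]
  simp only [ContinuousLinearMap.add_apply, ContinuousLinearMap.smul_apply,
    ContinuousLinearMap.sum_apply, ContinuousLinearMap.proj_apply, smul_eq_mul, pr, hproj,
    mul_ite, mul_one, mul_zero, Finset.sum_ite_eq', Finset.mem_univ, if_true]
  rw [denoiser_eq q L hq τ hτ μ hμpos r ℓ g]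
  have hDne : (∑ h, E h) ≠ 0 := hD.ne'
  simp only [← hE]
  field_simp
  ring


theorem stmt_18 (q L : ℕ) (hq : 1 ≤ q) (τ : ℝ) (hτ : 0 < τ)
    (μ : Fin L → Fin q → ℝ) (hμpos : ∀ ℓ g, 0 < μ ℓ g)
    (hμsum : ∀ ℓ, ∑ g, μ ℓ g = 1) (r : Fin L × Fin q → ℝ) :
    (∑ ℓ, ∑ g, fderiv ℝ (fun r' => blockDenoiser q L τ μ r' (ℓ, g)) r
        (Pi.single (ℓ, g) 1))
      = (1 / τ ^ 2) * ((∑ p, |blockDenoiser q L τ μ r p|)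
          - ∑ p, (blockDenoiser q L τ μ r p) ^ 2) := by
  have : Nonempty (Fin q) := ⟨⟨0, hq⟩⟩
  have hpos : ∀ p : Fin L × Fin q, 0 < blockDenoiser q L τ μ r p := by
    rintro ⟨ℓ, g⟩
    rw [denoiser_eq q L hq τ hτ μ hμpos r ℓ g]
    exact div_pos (mul_pos (Real.exp_pos _) (hμpos ℓ g))
      (Finset.sum_pos (fun h _ => mul_pos (Real.exp_pos _) (hμpos ℓ h))
        Finset.univ_nonempty)
  have habs : ∀ p : Fin L × Fin q, |blockDenoiser q L τ μ r p| = blockDenoiser q L τ μ r p :=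
    fun p => abs_of_pos (hpos p)
  simp only [fderiv_val q L hq τ hτ μ hμpos r, habs, one_div]
  rw [Fintype.sum_prod_type, Fintype.sum_prod_type]
  simp only [mul_sub, Finset.mul_sum, Finset.sum_sub_distrib]
end
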